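/- Let φ : S → G be a homomorphism of an inverse semigroup S onto a group G with H = φ⁻¹(1_G), and let ε : ℂS → ℂH be the restriction map (ε(Σ α_s s) = Σ_{h∈H} α_h h). Then for every f ∈ ℂS, ε(f* f) is a positive element of ℂS, i.e. a finite sum of elements of the form g* g with g ∈ ℂS. -/

import Mathlib

/-- Convolution product on the complex semigroup algebra `ℂS`
(finitely supported functions `S →₀ ℂ`). -/
noncomputable def cmul {S : Type*} [Semigroup S] (f g : S →₀ ℂ) : S →₀ ℂ :=
  f.sum fun s a => g.sum fun t b => Finsupp.single (s * t) (a * b)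

/-- The involution `f* = Σ conj(f(s)) s*` on `ℂS`. -/
noncomputable def cstar {S : Type*} [Semigroup S] (star : S → S) (f : S →₀ ℂ) :
    S →₀ ℂ :=
  f.sum fun s a => Finsupp.single (star s) ((starRingEnd ℂ) a)

/- The restriction map `ε : ℂS → ℂH`, `ε(Σ α_s s) = Σ_{s ∈ H} α_s s`,
for `H = {s : p s}`. -/
open Classical in
noncomputable def ceps {S : Type*} [Semigroup S] (p : S → Prop) (f : S →₀ ℂ) :
    S →₀ ℂ :=
  f.sum fun s a => if p s then Finsupp.single s a else 0

lemma cmul_cstar_self {S : Type*} [Semigroup S] (star : S → S) (f : S →₀ ℂ) :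
    cmul (cstar star f) f
      = ∑ s ∈ f.support, ∑ t ∈ f.support,
          Finsupp.single (star s * t) ((starRingEnd ℂ) (f s) * f t) := by
  unfold cmul cstar
  rw [Finsupp.sum_sum_index]
  · refine Finset.sum_congr rfl fun s hs => ?_
    dsimp only
    rw [Finsupp.sum_single_index]
    · rfl
    · simp
  · intro a; simp
  · intro a b₁ b₂; simp [add_mul, Finsupp.single_add, Finset.sum_add_distrib, Finsupp.sum]

open Classical in
lemma key {S : Type*} [Semigroup S] (star : S → S) (p : S → Prop) (f : S →₀ ℂ) :
    ceps p (cmul (cstar star f) f)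
      = ∑ s ∈ f.support, ∑ t ∈ f.support,
          (if p (star s * t) then
            Finsupp.single (star s * t) ((starRingEnd ℂ) (f s) * f t) else 0) := by
  rw [cmul_cstar_self]
  unfold ceps
  rw [← Finsupp.sum_finsetSum_index]
  · refine Finset.sum_congr rfl fun s hs => ?_
    rw [← Finsupp.sum_finsetSum_index]
    · refine Finset.sum_congr rfl fun t ht => ?_
      rw [Finsupp.sum_single_index]
      split_ifs <;> simp
    · intro i; split_ifs <;> simp
    · intro i x y; split_ifs <;> simp [Finsupp.single_add]
  · intro i; split_ifs <;> simp
  · intro i x y; split_ifs <;> simp [Finsupp.single_add]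

/-- Let `φ : S → G` be a homomorphism of an inverse semigroup `S` onto a group
`G`, `H = φ⁻¹(1)`, and `ε : ℂS → ℂH` the restriction map.  Then for every
`f ∈ ℂS`, `ε(f* f)` is a positive element of `ℂS`: a finite sum of elements of
the form `g* g` with `g ∈ ℂS`. -/
theorem stmt_10 {S G : Type*} [Semigroup S] [Group G] (star : S → S)
    (hst1 : ∀ s, s * star s * s = s)
    (hst2 : ∀ s, star s * s * star s = star s)
    (hstUniq : ∀ s t : S, s * t * s = s → t * s * t = t → t = star s)
    (φ : S → G) (hhom : ∀ a b : S, φ (a * b) = φ a * φ b)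
    (hsurj : Function.Surjective φ) :
    ∀ f : S →₀ ℂ, ∃ (n : ℕ) (g : Fin n → (S →₀ ℂ)),
      ceps (fun s => φ s = 1) (cmul (cstar star f) f)
        = ∑ i, cmul (cstar star (g i)) (g i) := by
  classical
  intro f
  -- φ (star s) = (φ s)⁻¹
  have hφstar : ∀ s : S, φ (star s) = (φ s)⁻¹ := by
    intro s
    have h : φ s * φ (star s) * φ s = φ s := by
      rw [← hhom, ← hhom, hst1]
    have h2 : φ s * φ (star s) = 1 := by
      have h' : φ s * φ (star s) * φ s = 1 * φ s := by rw [h, one_mul]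
      exact mul_right_cancel h'
    exact inv_eq_of_mul_eq_one_right h2 ▸ rfl
  set T : Finset G := f.support.image φ with hT
  refine ⟨T.card, fun i => f.filter (fun s => φ s = (T.equivFin.symm i : G)), ?_⟩
  rw [key]
  have hr : ∑ i : Fin T.card,
        cmul (cstar star (f.filter fun s => φ s = (T.equivFin.symm i : G)))
          (f.filter fun s => φ s = (T.equivFin.symm i : G))
      = ∑ c ∈ T.attach,
          cmul (cstar star (f.filter fun s => φ s = (c : G)))
            (f.filter fun s => φ s = (c : G)) :=
    Fintype.sum_equiv T.equivFin.symm _ _ (fun i => rfl)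
  rw [hr, Finset.sum_attach T
    (fun c => cmul (cstar star (f.filter fun s => φ s = c)) (f.filter fun s => φ s = c))]
  have hterm : ∀ c : G,
      cmul (cstar star (f.filter fun s => φ s = c)) (f.filter fun s => φ s = c)
        = ∑ s ∈ f.support, ∑ t ∈ f.support,
            (if φ s = c ∧ φ t = c then
              Finsupp.single (star s * t) ((starRingEnd ℂ) (f s) * f t) else 0) := by
    intro c
    rw [cmul_cstar_self, Finsupp.support_filter, Finset.sum_filter]
    refine Finset.sum_congr rfl fun s hs => ?_
    by_cases h1 : φ s = c
    · rw [if_pos h1, Finset.sum_filter]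
      refine Finset.sum_congr rfl fun t ht => ?_
      by_cases h2 : φ t = c
      · rw [if_pos h2, if_pos ⟨h1, h2⟩]
        simp [Finsupp.filter_apply, h1, h2]
      · rw [if_neg h2, if_neg (fun h => h2 h.2)]
    · rw [if_neg h1]
      exact (Finset.sum_eq_zero fun t ht => if_neg (fun h => h1 h.1)).symm
  simp_rw [hterm]
  have hswap : (∑ c ∈ T, ∑ s ∈ f.support, ∑ t ∈ f.support,
        (if φ s = c ∧ φ t = c then
          Finsupp.single (star s * t) ((starRingEnd ℂ) (f s) * f t) else 0))
      = ∑ s ∈ f.support, ∑ t ∈ f.support, ∑ c ∈ T,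
        (if φ s = c ∧ φ t = c then
          Finsupp.single (star s * t) ((starRingEnd ℂ) (f s) * f t) else 0) := by
    rw [Finset.sum_comm]
    exact Finset.sum_congr rfl fun s _ => Finset.sum_comm
  rw [hswap]
  refine Finset.sum_congr rfl fun s hs => Finset.sum_congr rfl fun t ht => ?_
  have hcond : (φ (star s * t) = 1) ↔ (φ t = φ s) := by
    rw [hhom, hφstar, inv_mul_eq_one, eq_comm]
  have hmem : φ s ∈ T := Finset.mem_image_of_mem φ hs
  have hpt : ∀ c ∈ T, (if φ s = c ∧ φ t = c then
        Finsupp.single (star s * t) ((starRingEnd ℂ) (f s) * f t) else 0)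
      = (if c = φ s then (if φ t = φ s then
          Finsupp.single (star s * t) ((starRingEnd ℂ) (f s) * f t) else 0) else 0) := by
    intro c _
    by_cases h1 : c = φ s
    · subst h1
      by_cases h2 : φ t = φ s
      · rw [if_pos ⟨rfl, h2⟩, if_pos rfl, if_pos h2]
      · rw [if_neg (fun h => h2 h.2), if_pos rfl, if_neg h2]
    · rw [if_neg (fun h => h1 h.1.symm), if_neg h1]
  rw [Finset.sum_congr rfl hpt, Finset.sum_ite_eq' T (φ s)]
  rw [if_pos hmem]
  by_cases h1 : φ (star s * t) = 1
  · rw [if_pos h1, if_pos (hcond.mp h1)]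
  · rw [if_neg h1, if_neg (fun h2 => h1 (hcond.mpr h2))]
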